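/- Let k be a Noetherian commutative ring, m ≥ 0, and W a k[S_m]-module. Suppose 0 → U¹ → M(W) → U² → 0 is a short exact sequence of FI-modules where U¹ is generated in degree m (i.e., U¹_n is spanned by the images of U¹_m under all FI-maps for every n). Then U¹ ≅ M(U¹_m) and U² ≅ M(U²_m), i.e., both are 'induced' FI-modules determined by their degree-m parts via U_n = Ind_{S_m × S_{n−m}}^{S_n}(U_m ⊠ k). -/

import Mathlib

/-- An FI-module (given by its degreewise data `V`, `Vmap`) is *induced from degree `m`*,
i.e. isomorphic to `M(V_m)` with `M(W)_n = Ind_{S_m × S_{n-m}}^{S_n}(W ⊠ k), via the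
canonical map: for every `n`, the natural map
`k[Inj(Fin m, Fin n)] ⊗ V_m → V_n`, `g ⊗ u ↦ V(g)(u)`, is surjective with kernel exactly
the span of the relations `(g ∘ τ) ⊗ u - g ⊗ V(τ)(u)` for `τ ∈ S_m`. -/
def IsInducedFrom (k : Type) [CommRing k] (V : ℕ → Type) [∀ n, AddCommGroup (V n)]
    [∀ n, Module k (V n)]
    (Vmap : ∀ {a b : ℕ}, (Fin a ↪ Fin b) → (V a →ₗ[k] V b)) (m : ℕ) : Prop :=
  ∀ n : ℕ,
    Function.Surjective ⇑(Finsupp.lsum k (fun g : Fin m ↪ Fin n => Vmap g)) ∧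
    LinearMap.ker (Finsupp.lsum k (fun g : Fin m ↪ Fin n => Vmap g)) =
      Submodule.span k {x | ∃ (τ : Equiv.Perm (Fin m)) (g : Fin m ↪ Fin n) (u : V m),
        x = Finsupp.single (τ.toEmbedding.trans g) u
          - Finsupp.single g (Vmap τ.toEmbedding u)}


namespace SubQuotMW

variable {m n : ℕ}

/-- The monotone representative of an injection `Fin m ↪ Fin n` with the same image. -/
noncomputable def rep (g : Fin m ↪ Fin n) : Fin m ↪ Fin n :=
  ((Finset.univ.map g).orderEmbOfFin (by simp)).toEmbedding

lemma range_rep (g : Fin m ↪ Fin n) : Set.range (rep g) = Set.range g := by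
  show Set.range ⇑((Finset.univ.map g).orderEmbOfFin _) = _
  rw [Finset.range_orderEmbOfFin, Finset.coe_map]
  simp

lemma rep_congr {g g' : Fin m ↪ Fin n}
    (h : Finset.univ.map g = Finset.univ.map g') : rep g = rep g' := by
  have key : ∀ (s t : Finset (Fin n)) (hs : s.card = m) (ht : t.card = m), s = t →
      (s.orderEmbOfFin hs).toEmbedding = (t.orderEmbOfFin ht).toEmbedding := by
    rintro s t hs ht rfl; rfl
  exact key _ _ _ _ h

/-- The permutation relating `g` to its monotone representative: `rep g ∘ perm g = g`. -/
noncomputable def perm (g : Fin m ↪ Fin n) : Equiv.Perm (Fin m) :=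
  (Equiv.ofInjective g g.injective).trans
    ((Equiv.setCongr (range_rep g).symm).trans
      (Equiv.ofInjective (rep g) (rep g).injective).symm)

lemma rep_perm (g : Fin m ↪ Fin n) (x : Fin m) : rep g (perm g x) = g x := by
  simp only [perm, Equiv.trans_apply]
  rw [Equiv.apply_ofInjective_symm (rep g).injective]
  rfl

lemma perm_trans_rep (g : Fin m ↪ Fin n) : (perm g).toEmbedding.trans (rep g) = g := by
  apply Function.Embedding.ext
  intro x
  exact rep_perm g x

lemma rep_trans (τ : Equiv.Perm (Fin m)) (g : Fin m ↪ Fin n) :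
    rep (τ.toEmbedding.trans g) = rep g :=
  rep_congr (by rw [← Finset.map_map, Finset.map_univ_equiv])

lemma perm_trans (τ : Equiv.Perm (Fin m)) (g : Fin m ↪ Fin n) :
    perm (τ.toEmbedding.trans g) = τ.trans (perm g) := by
  apply Equiv.ext; intro x
  apply (rep g).injective
  have h1 := rep_perm (τ.toEmbedding.trans g) x
  rw [rep_trans] at h1
  rw [Equiv.trans_apply, h1, rep_perm]
  rfl

lemma toEmb_trans (e f : Equiv.Perm (Fin m)) :
    (e.trans f).toEmbedding = e.toEmbedding.trans f.toEmbedding := rfl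


end SubQuotMW
section Alg

namespace SubQuotMW
set_option linter.dupNamespace false

variable {k : Type} [CommRing k] {V W : ℕ → Type}
  [∀ i, AddCommGroup (V i)] [∀ i, Module k (V i)]
  [∀ i, AddCommGroup (W i)] [∀ i, Module k (W i)]

/-- The canonical map `k[Inj(m,n)] ⊗ V_m → V_n`. -/
noncomputable def Phi (Vmap : ∀ {a b : ℕ}, (Fin a ↪ Fin b) → (V a →ₗ[k] V b))
    (m n : ℕ) : ((Fin m ↪ Fin n) →₀ V m) →ₗ[k] V n :=
  Finsupp.lsum k fun g => Vmap g

/-- Normalization operator `single g u ↦ single (rep g) (V(perm g) u)`. -/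
noncomputable def NV (Vmap : ∀ {a b : ℕ}, (Fin a ↪ Fin b) → (V a →ₗ[k] V b))
    (m n : ℕ) : ((Fin m ↪ Fin n) →₀ V m) →ₗ[k] ((Fin m ↪ Fin n) →₀ V m) :=
  Finsupp.lsum k fun g => (Finsupp.lsingle (rep g)).comp (Vmap (perm g).toEmbedding)

/-- The submodule of relations. -/
noncomputable def Rel (Vmap : ∀ {a b : ℕ}, (Fin a ↪ Fin b) → (V a →ₗ[k] V b))
    (m n : ℕ) : Submodule k ((Fin m ↪ Fin n) →₀ V m) :=
  Submodule.span k {x | ∃ (τ : Equiv.Perm (Fin m)) (g : Fin m ↪ Fin n) (u : V m),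
    x = Finsupp.single (τ.toEmbedding.trans g) u
      - Finsupp.single g (Vmap τ.toEmbedding u)}

variable (Vmap : ∀ {a b : ℕ}, (Fin a ↪ Fin b) → (V a →ₗ[k] V b))
variable (Wmap : ∀ {a b : ℕ}, (Fin a ↪ Fin b) → (W a →ₗ[k] W b))

lemma Phi_single {m n : ℕ} (g : Fin m ↪ Fin n) (u : V m) :
    Phi Vmap m n (Finsupp.single g u) = Vmap g u := by
  simp [Phi]

lemma NV_single {m n : ℕ} (g : Fin m ↪ Fin n) (u : V m) :
    NV Vmap m n (Finsupp.single g u)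
      = Finsupp.single (rep g) (Vmap (perm g).toEmbedding u) := by
  simp [NV]

lemma Rel_le_ker_Phi {m n : ℕ}
    (hcomp : ∀ {a b c : ℕ} (f : Fin a ↪ Fin b) (g : Fin b ↪ Fin c),
      Vmap (f.trans g) = (Vmap g).comp (Vmap f)) :
    Rel Vmap m n ≤ LinearMap.ker (Phi Vmap m n) := by
  rw [Rel, Submodule.span_le]
  rintro x ⟨τ, g, u, rfl⟩
  simp only [SetLike.mem_coe, LinearMap.mem_ker, map_sub, Phi_single]
  rw [hcomp τ.toEmbedding g]
  simp

lemma Rel_le_ker_NV {m n : ℕ}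
    (hcomp : ∀ {a b c : ℕ} (f : Fin a ↪ Fin b) (g : Fin b ↪ Fin c),
      Vmap (f.trans g) = (Vmap g).comp (Vmap f)) :
    Rel Vmap m n ≤ LinearMap.ker (NV Vmap m n) := by
  rw [Rel, Submodule.span_le]
  rintro x ⟨τ, g, u, rfl⟩
  simp only [SetLike.mem_coe, LinearMap.mem_ker, map_sub, NV_single]
  rw [rep_trans, perm_trans, toEmb_trans, hcomp τ.toEmbedding (perm g).toEmbedding]
  simp

lemma sub_NV_mem_Rel {m n : ℕ} (x : (Fin m ↪ Fin n) →₀ V m) :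
    x - NV Vmap m n x ∈ Rel Vmap m n := by
  induction x using Finsupp.induction_linear with
  | zero => simp
  | add f g hf hg =>
      have : (f + g) - NV Vmap m n (f + g) = (f - NV Vmap m n f) + (g - NV Vmap m n g) := by
        rw [map_add]; abel
      rw [this]; exact add_mem hf hg
  | single g u =>
      rw [NV_single]
      apply Submodule.subset_span
      refine ⟨perm g, rep g, u, ?_⟩
      rw [perm_trans_rep]

lemma Phi_comp_NV {m n : ℕ}
    (hcomp : ∀ {a b c : ℕ} (f : Fin a ↪ Fin b) (g : Fin b ↪ Fin c),
      Vmap (f.trans g) = (Vmap g).comp (Vmap f)) (x : (Fin m ↪ Fin n) →₀ V m) :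
    Phi Vmap m n (NV Vmap m n x) = Phi Vmap m n x := by
  have h : x - NV Vmap m n x ∈ LinearMap.ker (Phi Vmap m n) :=
    Rel_le_ker_Phi Vmap hcomp (sub_NV_mem_Rel Vmap x)
  have := LinearMap.mem_ker.mp h
  rw [map_sub, sub_eq_zero] at this
  exact this.symm

lemma comm_Phi {m n : ℕ} (f : ∀ i, V i →ₗ[k] W i)
    (hnat : ∀ {a b : ℕ} (g : Fin a ↪ Fin b), (f b).comp (Vmap g) = (Wmap g).comp (f a))
    (x : (Fin m ↪ Fin n) →₀ V m) :
    f n (Phi Vmap m n x) = Phi Wmap m n (Finsupp.mapRange.linearMap (f m) x) := by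
  have h : (f n).comp (Phi Vmap m n)
      = (Phi Wmap m n).comp (Finsupp.mapRange.linearMap (f m)) := by
    apply Finsupp.lhom_ext
    intro g u
    simp only [LinearMap.comp_apply, Phi_single, Finsupp.mapRange.linearMap_apply,
      Finsupp.mapRange_single, Phi_single]
    exact LinearMap.congr_fun (hnat g) u
  exact LinearMap.congr_fun h x

lemma comm_NV {m n : ℕ} (f : ∀ i, V i →ₗ[k] W i)
    (hnat : ∀ (τ : Fin m ↪ Fin m), (f m).comp (Vmap τ) = (Wmap τ).comp (f m))
    (x : (Fin m ↪ Fin n) →₀ V m) :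
    Finsupp.mapRange.linearMap (f m) (NV Vmap m n x)
      = NV Wmap m n (Finsupp.mapRange.linearMap (f m) x) := by
  have h : (Finsupp.mapRange.linearMap (f m)).comp (NV Vmap m n)
      = (NV Wmap m n).comp (Finsupp.mapRange.linearMap (f m)) := by
    apply Finsupp.lhom_ext
    intro g u
    simp only [LinearMap.comp_apply, NV_single, Finsupp.mapRange.linearMap_apply,
      Finsupp.mapRange_single, NV_single]
    congr 1
    exact LinearMap.congr_fun (hnat (perm g).toEmbedding) u
  exact LinearMap.congr_fun h x

lemma map_Rel_le {m n : ℕ} (f : ∀ i, V i →ₗ[k] W i)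
    (hnat : ∀ (τ : Fin m ↪ Fin m), (f m).comp (Vmap τ) = (Wmap τ).comp (f m)) :
    (Rel Vmap m n).map (Finsupp.mapRange.linearMap (f m)) ≤ Rel Wmap m n := by
  unfold Rel
  rw [Submodule.map_span, Submodule.span_le]
  rintro _ ⟨y, ⟨τ, g, u, rfl⟩, rfl⟩
  refine Submodule.subset_span ⟨τ, g, f m u, ?_⟩
  simp only [map_sub, Finsupp.mapRange.linearMap_apply, Finsupp.mapRange_single]
  have h := LinearMap.congr_fun (hnat τ.toEmbedding) u
  simp only [LinearMap.comp_apply] at h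
  rw [h]

end SubQuotMW

end Alg

section Main
open SubQuotMW
/-- Over a Noetherian ring `k`, if `0 → U¹ → M(W) → U² → 0` is a degreewise short exact
sequence of FI-modules in which the middle term is an induced module `M(W)` generated in
degree `m` and `U¹` is generated in degree `m`, then both `U¹` and `U²` are induced:
`U¹ ≅ M(U¹_m)` and `U² ≅ M(U²_m)`. -/
theorem sub_and_quotient_of_MW_induced (k : Type) [CommRing k] [IsNoetherianRing k]
    (m : ℕ)
    (U1 MW U2 : ℕ → Type)
    [∀ n, AddCommGroup (U1 n)] [∀ n, Module k (U1 n)]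
    [∀ n, AddCommGroup (MW n)] [∀ n, Module k (MW n)]
    [∀ n, AddCommGroup (U2 n)] [∀ n, Module k (U2 n)]
    (U1map : ∀ {a b : ℕ}, (Fin a ↪ Fin b) → (U1 a →ₗ[k] U1 b))
    (MWmap : ∀ {a b : ℕ}, (Fin a ↪ Fin b) → (MW a →ₗ[k] MW b))
    (U2map : ∀ {a b : ℕ}, (Fin a ↪ Fin b) → (U2 a →ₗ[k] U2 b))
    (hU1id : ∀ n, U1map (Function.Embedding.refl (Fin n)) = LinearMap.id)
    (hMWid : ∀ n, MWmap (Function.Embedding.refl (Fin n)) = LinearMap.id)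
    (hU2id : ∀ n, U2map (Function.Embedding.refl (Fin n)) = LinearMap.id)
    (hU1comp : ∀ {a b c : ℕ} (f : Fin a ↪ Fin b) (g : Fin b ↪ Fin c),
      U1map (f.trans g) = (U1map g).comp (U1map f))
    (hMWcomp : ∀ {a b c : ℕ} (f : Fin a ↪ Fin b) (g : Fin b ↪ Fin c),
      MWmap (f.trans g) = (MWmap g).comp (MWmap f))
    (hU2comp : ∀ {a b c : ℕ} (f : Fin a ↪ Fin b) (g : Fin b ↪ Fin c),
      U2map (f.trans g) = (U2map g).comp (U2map f))
    (ι : ∀ n, U1 n →ₗ[k] MW n) (π : ∀ n, MW n →ₗ[k] U2 n)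
    (hιnat : ∀ {a b : ℕ} (g : Fin a ↪ Fin b), (ι b).comp (U1map g) = (MWmap g).comp (ι a))
    (hπnat : ∀ {a b : ℕ} (g : Fin a ↪ Fin b), (π b).comp (MWmap g) = (U2map g).comp (π a))
    (hinj : ∀ n, Function.Injective ⇑(ι n))
    (hsurj : ∀ n, Function.Surjective ⇑(π n))
    (hexact : ∀ n, LinearMap.ker (π n) = LinearMap.range (ι n))
    (hMW : IsInducedFrom k MW (fun g => MWmap g) m)
    (hU1gen : ∀ n (y : U1 n),
      y ∈ Submodule.span k {x | ∃ (g : Fin m ↪ Fin n) (u : U1 m), x = U1map g u}) :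
    IsInducedFrom k U1 (fun g => U1map g) m ∧ IsInducedFrom k U2 (fun g => U2map g) m := by
  classical
  -- repackage the hypothesis on MW
  have hMWsurj : ∀ n, Function.Surjective ⇑(Phi (fun g => MWmap g) m n) :=
    fun n => (hMW n).1
  have hMWker : ∀ n, LinearMap.ker (Phi (fun g => MWmap g) m n)
      = Rel (fun g => MWmap g) m n := fun n => (hMW n).2
  -- π ∘ ι = 0 in degree m
  have hπι : ∀ u : U1 m, π m (ι m u) = 0 := fun u =>
    LinearMap.mem_ker.mp (hexact m ▸ LinearMap.mem_range_self (ι m) u)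
  -- injectivity of mapRange (ι m)
  have hιtilde_inj : ∀ {n : ℕ} (z : (Fin m ↪ Fin n) →₀ U1 m),
      Finsupp.mapRange.linearMap (ι m) z = 0 → z = 0 := by
    intro n z hz
    have h0 : Finsupp.mapRange (⇑(ι m)) (map_zero _) z = 0 := by
      simpa [Finsupp.mapRange.linearMap_apply] using hz
    exact Finsupp.mapRange_injective _ (map_zero _) (hinj m)
      (by rw [h0, Finsupp.mapRange_zero])
  -- surjectivity for U1
  have hΦ1surj : ∀ n, Function.Surjective ⇑(Phi (fun g => U1map g) m n) := by
    intro n y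
    have h : Submodule.span k {x | ∃ (g : Fin m ↪ Fin n) (u : U1 m), x = U1map g u} ≤
        LinearMap.range (Phi (fun g => U1map g) m n) := by
      rw [Submodule.span_le]
      rintro x ⟨g, u, rfl⟩
      exact ⟨Finsupp.single g u, Phi_single _ g u⟩
    exact LinearMap.mem_range.mp (h (hU1gen n y))
  -- kernel for U1
  have hΦ1ker : ∀ n, LinearMap.ker (Phi (fun g => U1map g) m n)
      = Rel (fun g => U1map g) m n := by
    intro n
    refine le_antisymm ?_ (Rel_le_ker_Phi _ hU1comp)
    intro x hx
    have hx' : Phi (fun g => U1map g) m n x = 0 := LinearMap.mem_ker.mp hx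
    have h1 : Phi (fun g => MWmap g) m n (Finsupp.mapRange.linearMap (ι m) x) = 0 := by
      rw [← comm_Phi (fun g => U1map g) (fun g => MWmap g) ι (fun g => hιnat g) x, hx',
        map_zero]
    have h2 : Finsupp.mapRange.linearMap (ι m) x ∈ Rel (fun g => MWmap g) m n :=
      hMWker n ▸ LinearMap.mem_ker.mpr h1
    have h3 : NV (fun g => MWmap g) m n (Finsupp.mapRange.linearMap (ι m) x) = 0 :=
      LinearMap.mem_ker.mp (Rel_le_ker_NV _ hMWcomp h2)
    have h4 : Finsupp.mapRange.linearMap (ι m) (NV (fun g => U1map g) m n x) = 0 := by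
      rw [comm_NV (fun g => U1map g) (fun g => MWmap g) ι (fun τ => hιnat τ) x]
      exact h3
    have h5 : NV (fun g => U1map g) m n x = 0 := hιtilde_inj _ h4
    have h6 := sub_NV_mem_Rel (fun g => U1map g) (m := m) (n := n) x
    rwa [h5, sub_zero] at h6
  -- surjectivity for U2
  have hΦ2surj : ∀ n, Function.Surjective ⇑(Phi (fun g => U2map g) m n) := by
    intro n v
    obtain ⟨w, hw⟩ := hsurj n v
    obtain ⟨a, ha⟩ := hMWsurj n w
    refine ⟨Finsupp.mapRange.linearMap (π m) a, ?_⟩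
    rw [← comm_Phi (fun g => MWmap g) (fun g => U2map g) π (fun g => hπnat g) a, ha, hw]
  -- kernel for U2
  have hΦ2ker : ∀ n, LinearMap.ker (Phi (fun g => U2map g) m n)
      = Rel (fun g => U2map g) m n := by
    intro n
    refine le_antisymm ?_ (Rel_le_ker_Phi _ hU2comp)
    intro x hx
    obtain ⟨w, hw⟩ : ∃ w, Finsupp.mapRange.linearMap (π m) w = x := by
      obtain ⟨w, hw⟩ := Finsupp.mapRange_surjective (⇑(π m)) (map_zero _) (hsurj m) x
      exact ⟨w, by simpa [Finsupp.mapRange.linearMap_apply] using hw⟩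
    have h1 : π n (Phi (fun g => MWmap g) m n w) = 0 := by
      rw [comm_Phi (fun g => MWmap g) (fun g => U2map g) π (fun g => hπnat g) w, hw]
      exact LinearMap.mem_ker.mp hx
    obtain ⟨z, hz⟩ := LinearMap.mem_range.mp (hexact n ▸ LinearMap.mem_ker.mpr h1)
    obtain ⟨x1, hx1⟩ := hΦ1surj n z
    have h2 : Phi (fun g => MWmap g) m n (w - Finsupp.mapRange.linearMap (ι m) x1) = 0 := by
      rw [map_sub, ← comm_Phi (fun g => U1map g) (fun g => MWmap g) ι (fun g => hιnat g) x1,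
        hx1, hz, sub_self]
    have h3 : w - Finsupp.mapRange.linearMap (ι m) x1 ∈ Rel (fun g => MWmap g) m n :=
      hMWker n ▸ LinearMap.mem_ker.mpr h2
    have h4 : Finsupp.mapRange.linearMap (π m) (w - Finsupp.mapRange.linearMap (ι m) x1)
        ∈ Rel (fun g => U2map g) m n :=
      map_Rel_le (fun g => MWmap g) (fun g => U2map g) π (fun τ => hπnat τ)
        (Submodule.mem_map_of_mem h3)
    have h5 : Finsupp.mapRange.linearMap (π m) (Finsupp.mapRange.linearMap (ι m) x1) = 0 := by
      have hcomp0 : (Finsupp.mapRange.linearMap (π m)).comp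
          (Finsupp.mapRange.linearMap (ι m))
          = (0 : ((Fin m ↪ Fin n) →₀ U1 m) →ₗ[k] ((Fin m ↪ Fin n) →₀ U2 m)) := by
        apply Finsupp.lhom_ext
        intro g u
        simp [hπι u]
      rw [← LinearMap.comp_apply, hcomp0]
      rfl
    rw [map_sub, hw, h5, sub_zero] at h4
    exact h4
  exact ⟨fun n => ⟨hΦ1surj n, hΦ1ker n⟩, fun n => ⟨hΦ2surj n, hΦ2ker n⟩⟩

end Main
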